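/- In the directed-fire Lanchester model with κ_B·B₀² > κ_R·R₀², the Red force reaches zero at the finite time t* = (1/√(κ_Bκ_R))·artanh(√(κ_Bκ_R)·R₀/(κ_B·B₀)), i.e., R(t*) = 0 for the explicit hyperbolic solution. -/

import Mathlib

/-- The inverse hyperbolic tangent, `artanh y = (1/2) log ((1+y)/(1-y))`. -/
noncomputable def artanh (y : ℝ) : ℝ := (1 / 2) * Real.log ((1 + y) / (1 - y))

lemma sinh_cosh_artanh {y : ℝ} (h0 : -1 < y) (h1 : y < 1) :
    Real.sinh (artanh y) = y * Real.cosh (artanh y) := by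
  have h1' : 0 < 1 - y := by linarith
  have h0' : 0 < 1 + y := by linarith
  have hu : 0 < (1 + y) / (1 - y) := div_pos h0' h1'
  have hs : 0 < Real.sqrt ((1 + y) / (1 - y)) := Real.sqrt_pos.mpr hu
  have hart : artanh y = Real.log (Real.sqrt ((1 + y) / (1 - y))) := by
    rw [Real.log_sqrt hu.le, artanh]; ring
  rw [hart, Real.sinh_log hs, Real.cosh_log hs]
  set s := Real.sqrt ((1 + y) / (1 - y)) with hsdef
  have hsq : s ^ 2 = (1 + y) / (1 - y) := Real.sq_sqrt hu.le
  have hsne : s ≠ 0 := hs.ne'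
  have hkey : s ^ 2 * (1 - y) = 1 + y := by
    rw [hsq]; field_simp
  field_simp
  linear_combination hkey

theorem lanchester_red_annihilation_time
    (κB κR B₀ R₀ : ℝ) (hκB : 0 < κB) (hκR : 0 < κR)
    (hB₀ : 0 < B₀) (hR₀ : 0 < R₀)
    (hdom : κB * B₀^2 > κR * R₀^2) :
    let c := Real.sqrt (κB * κR)
    let R := fun t : ℝ => R₀ * Real.cosh (c * t) - B₀ * Real.sqrt (κB / κR) * Real.sinh (c * t)
    let tstar := (1 / c) * artanh (c * R₀ / (κB * B₀))
    0 < tstar ∧ R tstar = 0 := by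
  intro c R tstar
  have hc : 0 < c := Real.sqrt_pos.mpr (mul_pos hκB hκR)
  set y : ℝ := c * R₀ / (κB * B₀) with hy
  clear_value y
  have hy0 : 0 < y := hy ▸ div_pos (mul_pos hc hR₀) (mul_pos hκB hB₀)
  -- y < 1 ⟺ c R₀ < κB B₀ ⟺ c² R₀² < κB² B₀²
  have hc2 : c ^ 2 = κB * κR := Real.sq_sqrt (mul_pos hκB hκR).le
  have hlt : c * R₀ < κB * B₀ := by
    nlinarith [mul_pos hc hR₀, mul_pos hκB hB₀]
  have hy1 : y < 1 := by
    rw [hy, div_lt_one (mul_pos hκB hB₀)]; exact hlt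
  have hctstar : c * tstar = artanh y := by
    rw [hy]; show c * ((1 / c) * artanh (c * R₀ / (κB * B₀))) = _; rw [← mul_assoc, mul_one_div_cancel hc.ne', one_mul]
  have hart_pos : 0 < artanh y := by
    have : 1 < (1 + y) / (1 - y) := by
      rw [lt_div_iff₀ (by linarith)]; linarith
    have := Real.log_pos this
    unfold artanh; linarith
  have hK : Real.sqrt (κB / κR) * c = κB := by
    rw [← Real.sqrt_mul (div_nonneg hκB.le hκR.le)]
    rw [show κB / κR * (κB * κR) = κB ^ 2 by field_simp]
    exact Real.sqrt_sq hκB.le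
  constructor
  · show 0 < (1 / c) * artanh (c * R₀ / (κB * B₀))
    rw [← hy]
    exact mul_pos (by positivity) hart_pos
  · show R₀ * Real.cosh (c * tstar) - B₀ * Real.sqrt (κB / κR) * Real.sinh (c * tstar) = 0
    rw [hctstar, sinh_cosh_artanh (by linarith) hy1]
    have key : B₀ * Real.sqrt (κB / κR) * y = R₀ := by
      rw [hy]
      calc B₀ * Real.sqrt (κB / κR) * (c * R₀ / (κB * B₀))
          = (Real.sqrt (κB / κR) * c) * (B₀ * R₀ / (κB * B₀)) := by ring
        _ = R₀ := by rw [hK]; field_simp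
    calc R₀ * Real.cosh (artanh y) - B₀ * Real.sqrt (κB / κR) * (y * Real.cosh (artanh y))
        = Real.cosh (artanh y) * (R₀ - B₀ * Real.sqrt (κB / κR) * y) := by ring
      _ = 0 := by rw [key]; ring
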